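/- arXiv:2203.06564 — 12 statements merged into one kernel-verified Lean document; each statement's English description precedes it below -/
import Mathlib

section
/- If K is a subsemiheap of the extended bicyclic semigroup containing a_{αβ} and a_{γδ} with γ ≥ α and δ ≥ β, then K also contains a_{α+δ-β, β+γ-α}, a_{α+δ-β, δ}, and a_{γ, β+γ-α}; moreover if γ-α ≤ δ-β then a_{γ, δ+(δ-β)-(γ-α)} ∈ K, and if γ-α ≥ δ-β then a_{γ+(γ-α)-(δ-β), δ} ∈ K. -/
/-- The extended bicyclic semigroup: pairs of integers with this product. -/
def emul (a b : ℤ × ℤ) : ℤ × ℤ :=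
  (a.1 + b.1 - min a.2 b.1, a.2 + b.2 - min a.2 b.1)

/-- The involution (i,j)* = (j,i). -/
def estar (a : ℤ × ℤ) : ℤ × ℤ := (a.2, a.1)

/-- The triple product x y* z. -/
def tri (x y z : ℤ × ℤ) : ℤ × ℤ := emul (emul x (estar y)) z

/-- A subsemiheap: a subset closed under the triple product x y* z. -/
def IsSubsemiheap (K : Set (ℤ × ℤ)) : Prop :=
  ∀ x ∈ K, ∀ y ∈ K, ∀ z ∈ K, tri x y z ∈ K

theorem stmt4 (K : Set (ℤ × ℤ)) (hK : IsSubsemiheap K)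
    (α β γ δ : ℤ) (h1 : ((α, β) : ℤ × ℤ) ∈ K) (h2 : ((γ, δ) : ℤ × ℤ) ∈ K)
    (hγ : γ ≥ α) (hδ : δ ≥ β) :
    ((α + δ - β, β + γ - α) : ℤ × ℤ) ∈ K ∧
    ((α + δ - β, δ) : ℤ × ℤ) ∈ K ∧
    ((γ, β + γ - α) : ℤ × ℤ) ∈ K ∧
    (γ - α ≤ δ - β → ((γ, δ + (δ - β) - (γ - α)) : ℤ × ℤ) ∈ K) ∧
    (γ - α ≥ δ - β → ((γ + (γ - α) - (δ - β), δ) : ℤ × ℤ) ∈ K) := by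
  refine ⟨?_, ?_, ?_, ?_, ?_⟩
  · have h := hK _ h1 _ h2 _ h1
    have e : tri (α, β) (γ, δ) (α, β) = (α + δ - β, β + γ - α) := by
      simp only [tri, emul, estar, Prod.mk.injEq]
      constructor <;> omega
    rwa [e] at h
  · have h := hK _ h1 _ h2 _ h2
    have e : tri (α, β) (γ, δ) (γ, δ) = (α + δ - β, δ) := by
      simp only [tri, emul, estar, Prod.mk.injEq]
      constructor <;> omega
    rwa [e] at h
  · have h := hK _ h2 _ h2 _ h1
    have e : tri (γ, δ) (γ, δ) (α, β) = (γ, β + γ - α) := by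
      simp only [tri, emul, estar, Prod.mk.injEq]
      constructor <;> omega
    rwa [e] at h
  · intro hle
    have h := hK _ h2 _ h1 _ h2
    have e : tri (γ, δ) (α, β) (γ, δ) = (γ, δ + (δ - β) - (γ - α)) := by
      simp only [tri, emul, estar, Prod.mk.injEq]
      constructor <;> omega
    rwa [e] at h
  · intro hge
    have h := hK _ h2 _ h1 _ h2
    have e : tri (γ, δ) (α, β) (γ, δ) = (γ + (γ - α) - (δ - β), δ) := by
      simp only [tri, emul, estar, Prod.mk.injEq]
      constructor <;> omega
    rwa [e] at h
end

section
/- If K is a subsemiheap of the extended bicyclic semigroup containing a_{αβ} and a_{γδ} with γ ≥ α and δ ≤ β, then K also contains a_{α, β+(γ-α)+(β-δ)}, a_{γ+β-δ, β}, a_{γ, β+γ-α}, and a_{γ+(β-δ)+(γ-α), δ}. -/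
theorem stmt5 (K : Set (ℤ × ℤ)) (hK : IsSubsemiheap K)
    (α β γ δ : ℤ) (h1 : ((α, β) : ℤ × ℤ) ∈ K) (h2 : ((γ, δ) : ℤ × ℤ) ∈ K)
    (hγ : γ ≥ α) (hδ : δ ≤ β) :
    ((α, β + (γ - α) + (β - δ)) : ℤ × ℤ) ∈ K ∧
    ((γ + β - δ, β) : ℤ × ℤ) ∈ K ∧
    ((γ, β + γ - α) : ℤ × ℤ) ∈ K ∧
    ((γ + (β - δ) + (γ - α), δ) : ℤ × ℤ) ∈ K := by
  refine ⟨?_, ?_, ?_, ?_⟩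
  · have h := hK _ h1 _ h2 _ h1
    have e : tri (α, β) (γ, δ) (α, β) = (α, β + (γ - α) + (β - δ)) := by
      simp [tri, emul, estar, Prod.ext_iff]; omega
    rwa [e] at h
  · have h := hK _ h2 _ h1 _ h1
    have e : tri (γ, δ) (α, β) (α, β) = (γ + β - δ, β) := by
      simp [tri, emul, estar, Prod.ext_iff]; omega
    rwa [e] at h
  · have h := hK _ h2 _ h2 _ h1
    have e : tri (γ, δ) (γ, δ) (α, β) = (γ, β + γ - α) := by
      simp [tri, emul, estar, Prod.ext_iff]; omega
    rwa [e] at h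
  · have h := hK _ h2 _ h1 _ h2
    have e : tri (γ, δ) (α, β) (γ, δ) = (γ + (β - δ) + (γ - α), δ) := by
      simp [tri, emul, estar, Prod.ext_iff]; omega
    rwa [e] at h
end

section
/- For any α, β ∈ ℤ and any subset J ⊆ ℕ₀, the set D_{α,β}(J) = { a_{α+j, β+j} : j ∈ J } is a subsemiheap of the extended bicyclic semigroup. -/
theorem stmt6 (α β : ℤ) (J : Set ℕ) :
    IsSubsemiheap {x : ℤ × ℤ | ∃ j ∈ J, x = (α + (j : ℤ), β + (j : ℤ))} := by
  rintro x ⟨j, hj, rfl⟩ y ⟨k, hk, rfl⟩ z ⟨l, hl, rfl⟩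
  refine ⟨max (max j k) l, ?_, ?_⟩
  · rcases max_cases (max j k) l with ⟨h, _⟩ | ⟨h, _⟩
    · rw [h]; rcases max_cases j k with ⟨h2, _⟩ | ⟨h2, _⟩ <;> rw [h2] <;> assumption
    · rw [h]; exact hl
  · simp only [tri, emul, estar, Prod.mk.injEq]
    push_cast
    constructor <;> rcases le_total j k with h | h <;> rcases le_total (max j k) l with h2 | h2 <;>
      simp_all [max_def, min_def] <;> omega
end

section
/- For any α, β ∈ ℤ and any σ ∈ ℕ with σ ≥ 1, the set K_{α,β}^σ = { a_{α+ℓσ, β+mσ} : ℓ, m ∈ ℕ₀ } is a subsemiheap of the extended bicyclic semigroup. -/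
lemma minlin (c : ℤ) (s a b : ℕ) :
    min (c + (a : ℤ) * s) (c + (b : ℤ) * s) = c + (min a b : ℕ) * s := by
  rcases le_total a b with h | h
  · have h' : (a : ℤ) * s ≤ (b : ℤ) * s :=
      mul_le_mul_of_nonneg_right (by exact_mod_cast h) (by positivity)
    rw [min_eq_left (by linarith), Nat.min_eq_left h]
  · have h' : (b : ℤ) * s ≤ (a : ℤ) * s :=
      mul_le_mul_of_nonneg_right (by exact_mod_cast h) (by positivity)
    rw [min_eq_right (by linarith), Nat.min_eq_right h]

theorem stmt7 (α β : ℤ) (σ : ℕ) (hσ : 1 ≤ σ) :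
    IsSubsemiheap {x : ℤ × ℤ | ∃ l m : ℕ, x = (α + (l : ℤ) * σ, β + (m : ℤ) * σ)} := by
  rintro x ⟨l, m, rfl⟩ y ⟨l', m', rfl⟩ z ⟨l'', m'', rfl⟩
  simp only [tri, emul, estar, Set.mem_setOf_eq]
  have h1 : min m m' ≤ m := Nat.min_le_left _ _
  have h1' : min m m' ≤ m' := Nat.min_le_right _ _
  set t := m + l' - min m m' with ht
  have h2 : min t l'' ≤ t := Nat.min_le_left _ _
  have h2' : min t l'' ≤ l'' := Nat.min_le_right _ _
  refine ⟨l + (m' - min m m') + (l'' - min t l''), t - min t l'' + m'', ?_⟩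
  have e1 : min (β + (m : ℤ) * σ) (β + (m' : ℤ) * σ) = β + (min m m' : ℕ) * σ :=
    minlin β σ m m'
  have e2 : β + (m : ℤ) * σ + (α + (l' : ℤ) * σ) - (β + (min m m' : ℕ) * σ)
      = α + (t : ℤ) * σ := by
    rw [ht]; push_cast [Nat.sub_add_comm, h1]
    push_cast [Nat.cast_sub (le_trans h1 (Nat.le_add_right m l'))]
    ring
  ext <;> simp only [e1, e2, minlin α σ t l''] <;>
    push_cast [Nat.cast_sub h1', Nat.cast_sub h2, Nat.cast_sub h2',
      Nat.cast_sub (le_trans h1 (Nat.le_add_right m l'))] <;> ring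
end

section
/- For any α, β ∈ ℤ, the set K_{α,β} = { a_{pq} : p ≥ α, q ≥ β } is a subsemiheap of the extended bicyclic semigroup, and it equals a_{αα} E a_{ββ} = a_{αα}E ∩ Ea_{ββ}. -/
theorem stmt8 (α β : ℤ) :
    IsSubsemiheap {x : ℤ × ℤ | α ≤ x.1 ∧ β ≤ x.2} ∧
    {x : ℤ × ℤ | α ≤ x.1 ∧ β ≤ x.2}
      = {y : ℤ × ℤ | ∃ x : ℤ × ℤ, y = emul (emul (α, α) x) (β, β)} ∧
    {x : ℤ × ℤ | α ≤ x.1 ∧ β ≤ x.2}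
      = {y : ℤ × ℤ | ∃ x : ℤ × ℤ, y = emul (α, α) x} ∩
        {y : ℤ × ℤ | ∃ x : ℤ × ℤ, y = emul x (β, β)} := by
  refine ⟨?_, ?_, ?_⟩
  · intro x hx y hy z hz
    simp only [Set.mem_setOf_eq] at *
    simp only [tri, emul, estar]
    constructor <;> omega
  · ext ⟨p, q⟩
    simp only [Set.mem_setOf_eq]
    constructor
    · rintro ⟨hp, hq⟩
      exact ⟨(p, q), by simp [emul]; omega⟩
    · rintro ⟨x, hx⟩
      simp only [emul] at hx
      obtain ⟨h1, h2⟩ := Prod.ext_iff.mp hx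
      dsimp at h1 h2
      omega
  · ext ⟨p, q⟩
    simp only [Set.mem_setOf_eq, Set.mem_inter_iff]
    constructor
    · rintro ⟨hp, hq⟩
      exact ⟨⟨(p, q), by simp [emul]; omega⟩, ⟨(p, q), by simp [emul]; omega⟩⟩
    · rintro ⟨⟨x, hx⟩, ⟨z, hz⟩⟩
      simp only [emul] at hx hz
      obtain ⟨h1, h2⟩ := Prod.ext_iff.mp hx
      obtain ⟨h3, h4⟩ := Prod.ext_iff.mp hz
      dsimp at h1 h2 h3 h4
      omega
end

section
/- Let α₀, β₀ ∈ ℤ, ℓ₀, σ ∈ ℕ, and 0 < k₁ < k₂ < ⋯ < k_{ℓ₀}. Then the set K = {a_{α₀β₀}} ∪ { a_{α₀+k_j, β₀+k_j} : 1 ≤ j ≤ ℓ₀-1 } ∪ { a_{α₀+k_{ℓ₀}+mσ, β₀+k_{ℓ₀}+nσ} : m, n ∈ ℕ₀ } is a subsemiheap of the extended bicyclic semigroup. -/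
namespace Stmt9Aux

abbrev DiagVal (l₀ : ℕ) (k : ℕ → ℤ) (s : ℤ) : Prop :=
  s = 0 ∨ ∃ j : ℕ, 1 ≤ j ∧ j ≤ l₀ - 1 ∧ s = k j

abbrev GridVal (l₀ σ : ℕ) (k : ℕ → ℤ) (g : ℤ) : Prop :=
  ∃ m : ℕ, g = k l₀ + (m : ℤ) * σ

abbrev PairVal (l₀ σ : ℕ) (k : ℕ → ℤ) (p q : ℤ) : Prop :=
  (p = q ∧ DiagVal l₀ k p) ∨ (GridVal l₀ σ k p ∧ GridVal l₀ σ k q)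

lemma kmono_le (l₀ : ℕ) (k : ℕ → ℤ)
    (hkmono : ∀ j : ℕ, 1 ≤ j → j < l₀ → k j < k (j + 1))
    (i j : ℕ) (h1 : 1 ≤ i) (h2 : i ≤ j) (h3 : j ≤ l₀) : k i ≤ k j := by
  revert h3
  induction j, h2 using Nat.le_induction with
  | base => intro _; exact le_rfl
  | succ n hn ih =>
    intro h3
    have h4 := hkmono n (le_trans h1 hn) (by omega)
    have h5 := ih (by omega)
    omega

lemma diag_bounds (l₀ : ℕ) (k : ℕ → ℤ) (hl₀ : 1 ≤ l₀) (hk1 : 0 < k 1)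
    (hkmono : ∀ j : ℕ, 1 ≤ j → j < l₀ → k j < k (j + 1))
    {s : ℤ} (hs : DiagVal l₀ k s) : 0 ≤ s ∧ s < k l₀ := by
  have h1l : k 1 ≤ k l₀ := kmono_le l₀ k hkmono 1 l₀ le_rfl hl₀ le_rfl
  rcases hs with rfl | ⟨j, hj1, hj2, rfl⟩
  · omega
  · have hjl : j < l₀ := by omega
    have h2 := hkmono j hj1 hjl
    have h3 : k (j + 1) ≤ k l₀ := kmono_le l₀ k hkmono (j + 1) l₀ (by omega) (by omega) le_rfl
    have h4 : k 1 ≤ k j := kmono_le l₀ k hkmono 1 j le_rfl hj1 (by omega)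
    omega

lemma grid_ge (l₀ σ : ℕ) (k : ℕ → ℤ) {g : ℤ} (hg : GridVal l₀ σ k g) : k l₀ ≤ g := by
  obtain ⟨m, rfl⟩ := hg
  have h : (0 : ℤ) ≤ (m : ℤ) * (σ : ℤ) := by positivity
  linarith

lemma diag_congr (l₀ : ℕ) (k : ℕ → ℤ) {s r : ℤ} (h : DiagVal l₀ k s) (he : r = s) :
    DiagVal l₀ k r := he ▸ h

lemma grid_congr (l₀ σ : ℕ) (k : ℕ → ℤ) {g r : ℤ} (h : GridVal l₀ σ k g) (he : r = g) :
    GridVal l₀ σ k r := he ▸ h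

lemma grid5 (l₀ σ : ℕ) (k : ℕ → ℤ) (hσ : 1 ≤ σ) {a b c d e r : ℤ}
    (ha : GridVal l₀ σ k a) (hb : GridVal l₀ σ k b) (hc : GridVal l₀ σ k c)
    (hd : GridVal l₀ σ k d) (he : GridVal l₀ σ k e)
    (hle : c + e ≤ b + d) (heq : r = a + b - c + d - e) : GridVal l₀ σ k r := by
  obtain ⟨ma, rfl⟩ := ha
  obtain ⟨mb, rfl⟩ := hb
  obtain ⟨mc, rfl⟩ := hc
  obtain ⟨md, rfl⟩ := hd
  obtain ⟨me, rfl⟩ := he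
  have hσ0 : (0 : ℤ) < (σ : ℤ) := by exact_mod_cast hσ
  have h1 : ((mc + me : ℕ) : ℤ) * σ ≤ ((mb + md : ℕ) : ℤ) * σ := by push_cast; linarith
  have hm : mc + me ≤ mb + md := by
    have h2 := le_of_mul_le_mul_right h1 hσ0
    exact_mod_cast h2
  refine ⟨ma + (mb + md - (mc + me)), ?_⟩
  have hcast : ((ma + (mb + md - (mc + me)) : ℕ) : ℤ)
      = (ma : ℤ) + ((mb : ℤ) + (md : ℤ) - ((mc : ℤ) + (me : ℤ))) := by omega
  rw [heq, hcast]
  ring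

lemma grid3 (l₀ σ : ℕ) (k : ℕ → ℤ) (hσ : 1 ≤ σ) {a b c r : ℤ}
    (ha : GridVal l₀ σ k a) (hb : GridVal l₀ σ k b) (hc : GridVal l₀ σ k c)
    (hle : c ≤ b) (heq : r = a + b - c) : GridVal l₀ σ k r :=
  grid5 l₀ σ k hσ ha hb hc ha ha (by omega) (by omega)

lemma key (l₀ σ : ℕ) (k : ℕ → ℤ) (hl₀ : 1 ≤ l₀) (hσ : 1 ≤ σ) (hk1 : 0 < k 1)
    (hkmono : ∀ j : ℕ, 1 ≤ j → j < l₀ → k j < k (j + 1))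
    (u u' v v' w w' : ℤ)
    (hx : PairVal l₀ σ k u u') (hy : PairVal l₀ σ k v v') (hz : PairVal l₀ σ k w w') :
    PairVal l₀ σ k (u + v' - min u' v' + w - min (u' + v - min u' v') w)
      (u' + v - min u' v' + w' - min (u' + v - min u' v') w) := by
  rcases hx with ⟨hxe, hxd⟩ | ⟨hxg, hxg'⟩
  · have hxb := diag_bounds l₀ k hl₀ hk1 hkmono hxd
    rcases hy with ⟨hye, hyd⟩ | ⟨hyg, hyg'⟩
    · have hyb := diag_bounds l₀ k hl₀ hk1 hkmono hyd
      rcases hz with ⟨hze, hzd⟩ | ⟨hzg, hzg'⟩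
      · -- D D D
        have hzb := diag_bounds l₀ k hl₀ hk1 hkmono hzd
        rcases le_total u' v' with h1 | h1 <;>
          rcases le_total (u' + v - min u' v') w with h2 | h2
        · exact Or.inl ⟨by omega, diag_congr l₀ k hzd (by omega)⟩
        · exact Or.inl ⟨by omega, diag_congr l₀ k hyd (by omega)⟩
        · exact Or.inl ⟨by omega, diag_congr l₀ k hzd (by omega)⟩
        · exact Or.inl ⟨by omega, diag_congr l₀ k hxd (by omega)⟩
      · -- D D G
        have hzb := grid_ge l₀ σ k hzg
        have hzb' := grid_ge l₀ σ k hzg'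
        rcases le_total u' v' with h1 | h1 <;>
          rcases le_total (u' + v - min u' v') w with h2 | h2
        · exact Or.inr ⟨grid_congr l₀ σ k hzg (by omega), grid_congr l₀ σ k hzg' (by omega)⟩
        · exact False.elim (by omega)
        · exact Or.inr ⟨grid_congr l₀ σ k hzg (by omega), grid_congr l₀ σ k hzg' (by omega)⟩
        · exact False.elim (by omega)
    · have hyb := grid_ge l₀ σ k hyg
      have hyb' := grid_ge l₀ σ k hyg'
      rcases hz with ⟨hze, hzd⟩ | ⟨hzg, hzg'⟩
      · -- D G D
        have hzb := diag_bounds l₀ k hl₀ hk1 hkmono hzd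
        rcases le_total u' v' with h1 | h1 <;>
          rcases le_total (u' + v - min u' v') w with h2 | h2
        · exact False.elim (by omega)
        · exact Or.inr ⟨grid_congr l₀ σ k hyg' (by omega), grid_congr l₀ σ k hyg (by omega)⟩
        · exact False.elim (by omega)
        · exact False.elim (by omega)
      · -- D G G
        have hzb := grid_ge l₀ σ k hzg
        have hzb' := grid_ge l₀ σ k hzg'
        rcases le_total u' v' with h1 | h1 <;>
          rcases le_total (u' + v - min u' v') w with h2 | h2
        · exact Or.inr ⟨grid3 l₀ σ k hσ hyg' hzg hyg (by omega) (by omega),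
            grid_congr l₀ σ k hzg' (by omega)⟩
        · exact Or.inr ⟨grid_congr l₀ σ k hyg' (by omega),
            grid3 l₀ σ k hσ hzg' hyg hzg (by omega) (by omega)⟩
        · exact False.elim (by omega)
        · exact False.elim (by omega)
  · have hxb := grid_ge l₀ σ k hxg
    have hxb' := grid_ge l₀ σ k hxg'
    rcases hy with ⟨hye, hyd⟩ | ⟨hyg, hyg'⟩
    · have hyb := diag_bounds l₀ k hl₀ hk1 hkmono hyd
      rcases hz with ⟨hze, hzd⟩ | ⟨hzg, hzg'⟩
      · -- G D D
        have hzb := diag_bounds l₀ k hl₀ hk1 hkmono hzd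
        rcases le_total u' v' with h1 | h1 <;>
          rcases le_total (u' + v - min u' v') w with h2 | h2
        · exact False.elim (by omega)
        · exact False.elim (by omega)
        · exact False.elim (by omega)
        · exact Or.inr ⟨grid_congr l₀ σ k hxg (by omega), grid_congr l₀ σ k hxg' (by omega)⟩
      · -- G D G
        have hzb := grid_ge l₀ σ k hzg
        have hzb' := grid_ge l₀ σ k hzg'
        rcases le_total u' v' with h1 | h1 <;>
          rcases le_total (u' + v - min u' v') w with h2 | h2
        · exact False.elim (by omega)
        · exact False.elim (by omega)
        · exact Or.inr ⟨grid3 l₀ σ k hσ hxg hzg hxg' (by omega) (by omega),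
            grid_congr l₀ σ k hzg' (by omega)⟩
        · exact Or.inr ⟨grid_congr l₀ σ k hxg (by omega),
            grid3 l₀ σ k hσ hzg' hxg' hzg (by omega) (by omega)⟩
    · have hyb := grid_ge l₀ σ k hyg
      have hyb' := grid_ge l₀ σ k hyg'
      rcases hz with ⟨hze, hzd⟩ | ⟨hzg, hzg'⟩
      · -- G G D
        have hzb := diag_bounds l₀ k hl₀ hk1 hkmono hzd
        rcases le_total u' v' with h1 | h1 <;>
          rcases le_total (u' + v - min u' v') w with h2 | h2
        · exact False.elim (by omega)
        · exact Or.inr ⟨grid3 l₀ σ k hσ hxg hyg' hxg' (by omega) (by omega),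
            grid_congr l₀ σ k hyg (by omega)⟩
        · exact False.elim (by omega)
        · exact Or.inr ⟨grid_congr l₀ σ k hxg (by omega),
            grid3 l₀ σ k hσ hyg hxg' hyg' (by omega) (by omega)⟩
      · -- G G G
        have hzb := grid_ge l₀ σ k hzg
        have hzb' := grid_ge l₀ σ k hzg'
        rcases le_total u' v' with h1 | h1 <;>
          rcases le_total (u' + v - min u' v') w with h2 | h2
        · exact Or.inr ⟨grid5 l₀ σ k hσ hxg hyg' hxg' hzg hyg (by omega) (by omega),
            grid_congr l₀ σ k hzg' (by omega)⟩
        · exact Or.inr ⟨grid3 l₀ σ k hσ hxg hyg' hxg' (by omega) (by omega),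
            grid3 l₀ σ k hσ hzg' hyg hzg (by omega) (by omega)⟩
        · exact Or.inr ⟨grid5 l₀ σ k hσ hxg hzg hxg' hyg' hyg (by omega) (by omega),
            grid_congr l₀ σ k hzg' (by omega)⟩
        · exact Or.inr ⟨grid_congr l₀ σ k hxg (by omega),
            grid5 l₀ σ k hσ hzg' hxg' hyg' hyg hzg (by omega) (by omega)⟩

lemma mem_iff (α₀ β₀ : ℤ) (l₀ σ : ℕ) (k : ℕ → ℤ) (p : ℤ × ℤ) :
    (p ∈ ({((α₀, β₀) : ℤ × ℤ)} ∪
       {x : ℤ × ℤ | ∃ j : ℕ, 1 ≤ j ∧ j ≤ l₀ - 1 ∧ x = (α₀ + k j, β₀ + k j)} ∪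
       {x : ℤ × ℤ | ∃ m n : ℕ,
          x = (α₀ + k l₀ + (m : ℤ) * σ, β₀ + k l₀ + (n : ℤ) * σ)})) ↔
    ∃ a b : ℤ, p = (α₀ + a, β₀ + b) ∧ PairVal l₀ σ k a b := by
  simp only [Set.mem_union, Set.mem_singleton_iff, Set.mem_setOf_eq]
  constructor
  · rintro ((rfl | ⟨j, hj1, hj2, rfl⟩) | ⟨m, n, rfl⟩)
    · exact ⟨0, 0, by simp, Or.inl ⟨rfl, Or.inl rfl⟩⟩
    · exact ⟨k j, k j, rfl, Or.inl ⟨rfl, Or.inr ⟨j, hj1, hj2, rfl⟩⟩⟩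
    · exact ⟨k l₀ + (m : ℤ) * σ, k l₀ + (n : ℤ) * σ,
        by rw [Prod.mk.injEq]; exact ⟨by ring, by ring⟩,
        Or.inr ⟨⟨m, rfl⟩, ⟨n, rfl⟩⟩⟩
  · rintro ⟨a, b, rfl, (⟨rfl, (rfl | ⟨j, hj1, hj2, rfl⟩)⟩ | ⟨⟨m, rfl⟩, ⟨n, rfl⟩⟩)⟩
    · left; left; simp
    · left; right; exact ⟨j, hj1, hj2, rfl⟩
    · right; exact ⟨m, n, by rw [Prod.mk.injEq]; exact ⟨by ring, by ring⟩⟩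

end Stmt9Aux

theorem stmt9 (α₀ β₀ : ℤ) (l₀ σ : ℕ) (hl₀ : 1 ≤ l₀) (hσ : 1 ≤ σ)
    (k : ℕ → ℤ) (hk1 : 0 < k 1)
    (hkmono : ∀ j : ℕ, 1 ≤ j → j < l₀ → k j < k (j + 1)) :
    IsSubsemiheap
      ({((α₀, β₀) : ℤ × ℤ)} ∪
       {x : ℤ × ℤ | ∃ j : ℕ, 1 ≤ j ∧ j ≤ l₀ - 1 ∧ x = (α₀ + k j, β₀ + k j)} ∪
       {x : ℤ × ℤ | ∃ m n : ℕ,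
          x = (α₀ + k l₀ + (m : ℤ) * σ, β₀ + k l₀ + (n : ℤ) * σ)}) := by
  intro x hx y hy z hz
  rw [Stmt9Aux.mem_iff] at hx hy hz ⊢
  obtain ⟨a, b, rfl, hab⟩ := hx
  obtain ⟨c, d, rfl, hcd⟩ := hy
  obtain ⟨e, f, rfl, hef⟩ := hz
  refine ⟨a + d - min b d + e - min (b + c - min b d) e,
          b + c - min b d + f - min (b + c - min b d) e, ?_,
          Stmt9Aux.key l₀ σ k hl₀ hσ hk1 hkmono a b c d e f hab hcd hef⟩
  simp only [tri, emul, estar]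
  rw [Prod.mk.injEq]
  constructor <;> omega
end

section
/- Let p ∈ ℕ with p ≥ 1 and A ⊆ {0, 1, …, p-1}. Then K = { (k+ℓp, k+mp) : k ∈ A, ℓ, m ∈ ℕ₀ } is a subsemiheap of the extended bicyclic semigroup; in fact K is closed under the binary product as well, so it is a sub-inverse semigroup. -/
lemma mul_closed (p : ℕ) (hp : 1 ≤ p) (A : Set ℕ) (hA : ∀ k ∈ A, k < p) :
    ∀ x ∈ {x : ℤ × ℤ | ∃ k ∈ A, ∃ l m : ℕ,
        x = ((k : ℤ) + (l : ℤ) * p, (k : ℤ) + (m : ℤ) * p)},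
     ∀ y ∈ {x : ℤ × ℤ | ∃ k ∈ A, ∃ l m : ℕ,
        x = ((k : ℤ) + (l : ℤ) * p, (k : ℤ) + (m : ℤ) * p)},
      emul x y ∈ {x : ℤ × ℤ | ∃ k ∈ A, ∃ l m : ℕ,
        x = ((k : ℤ) + (l : ℤ) * p, (k : ℤ) + (m : ℤ) * p)} := by
  rintro x ⟨k, hk, l, m, rfl⟩ y ⟨k', hk', l', m', rfl⟩
  have hkp := hA k hk
  have hkp' := hA k' hk'
  have hpos : (0:ℤ) < p := by exact_mod_cast hp
  rcases le_total ((k:ℤ) + m * p) ((k':ℤ) + l' * p) with h | h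
  · -- min = x.2 = k + m*p
    have hml : m ≤ l' := by
      by_contra hc
      push_neg at hc
      have : (l':ℤ) + 1 ≤ m := by exact_mod_cast hc
      nlinarith [hpos]
    refine ⟨k', hk', l + (l' - m), m', ?_⟩
    simp only [emul, min_eq_left h]
    ext <;> simp <;> push_cast [Nat.cast_sub hml] <;> ring
  · -- min = y.1 = k' + l'*p
    have hml : l' ≤ m := by
      by_contra hc
      push_neg at hc
      have : (m:ℤ) + 1 ≤ l' := by exact_mod_cast hc
      nlinarith [hpos]
    refine ⟨k, hk, l, m + m' - l', ?_⟩
    have hml2 : l' ≤ m + m' := hml.trans (Nat.le_add_right _ _)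
    simp only [emul, min_eq_right h]
    ext <;> simp <;> push_cast [Nat.cast_sub hml2] <;> ring

theorem stmt10 (p : ℕ) (hp : 1 ≤ p) (A : Set ℕ) (hA : ∀ k ∈ A, k < p) :
    IsSubsemiheap {x : ℤ × ℤ | ∃ k ∈ A, ∃ l m : ℕ,
        x = ((k : ℤ) + (l : ℤ) * p, (k : ℤ) + (m : ℤ) * p)} ∧
    (∀ x ∈ {x : ℤ × ℤ | ∃ k ∈ A, ∃ l m : ℕ,
        x = ((k : ℤ) + (l : ℤ) * p, (k : ℤ) + (m : ℤ) * p)},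
     ∀ y ∈ {x : ℤ × ℤ | ∃ k ∈ A, ∃ l m : ℕ,
        x = ((k : ℤ) + (l : ℤ) * p, (k : ℤ) + (m : ℤ) * p)},
      emul x y ∈ {x : ℤ × ℤ | ∃ k ∈ A, ∃ l m : ℕ,
        x = ((k : ℤ) + (l : ℤ) * p, (k : ℤ) + (m : ℤ) * p)}) ∧
    (∀ x ∈ {x : ℤ × ℤ | ∃ k ∈ A, ∃ l m : ℕ,
        x = ((k : ℤ) + (l : ℤ) * p, (k : ℤ) + (m : ℤ) * p)},
      estar x ∈ {x : ℤ × ℤ | ∃ k ∈ A, ∃ l m : ℕ,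
        x = ((k : ℤ) + (l : ℤ) * p, (k : ℤ) + (m : ℤ) * p)}) := by
  have hstar : ∀ x ∈ {x : ℤ × ℤ | ∃ k ∈ A, ∃ l m : ℕ,
        x = ((k : ℤ) + (l : ℤ) * p, (k : ℤ) + (m : ℤ) * p)},
      estar x ∈ {x : ℤ × ℤ | ∃ k ∈ A, ∃ l m : ℕ,
        x = ((k : ℤ) + (l : ℤ) * p, (k : ℤ) + (m : ℤ) * p)} := by
    rintro x ⟨k, hk, l, m, rfl⟩
    exact ⟨k, hk, m, l, rfl⟩
  refine ⟨?_, mul_closed p hp A hA, hstar⟩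
  intro x hx y hy z hz
  exact mul_closed p hp A hA _ (mul_closed p hp A hA _ hx _ (hstar _ hy)) _ hz
end

section
/- Let K be a subsemiheap of the extended bicyclic semigroup contained in K_{α₀,β₀} = {a_{pq} : p ≥ α₀, q ≥ β₀} with a_{α₀β₀} ∈ K. If a_{α₀β} ∉ K for all β > β₀ and a_{αβ₀} ∉ K for all α > α₀, and a_{α₀+k,β₀+k} ∉ K for all k ≥ 1, then K = {a_{α₀β₀}}. -/
lemma tri_exx (a b p q : ℤ) (hb : b ≤ q) (hp : a ≤ p) :
    tri (a, b) (p, q) (p, q) = (a + q - b, q) := by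
  simp only [tri, emul, estar]
  simp only [min_def]
  split_ifs <;> simp <;> omega

lemma tri_xxe (a b p q : ℤ) (hb : b ≤ q) (hp : a ≤ p) :
    tri (p, q) (p, q) (a, b) = (p, p + b - a) := by
  simp only [tri, emul, estar]
  simp only [min_def]
  split_ifs <;> simp <;> omega

theorem stmt13 (K : Set (ℤ × ℤ)) (hK : IsSubsemiheap K) (α₀ β₀ : ℤ)
    (hsub : K ⊆ {x : ℤ × ℤ | α₀ ≤ x.1 ∧ β₀ ≤ x.2})
    (hmem : ((α₀, β₀) : ℤ × ℤ) ∈ K)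
    (hrow : ∀ β : ℤ, β₀ < β → ((α₀, β) : ℤ × ℤ) ∉ K)
    (hcol : ∀ α : ℤ, α₀ < α → ((α, β₀) : ℤ × ℤ) ∉ K)
    (hdiag : ∀ k : ℤ, 1 ≤ k → ((α₀ + k, β₀ + k) : ℤ × ℤ) ∉ K) :
    K = {((α₀, β₀) : ℤ × ℤ)} := by
  ext x
  simp only [Set.mem_singleton_iff]
  constructor
  · intro hx
    obtain ⟨p, q⟩ := x
    obtain ⟨hp, hq⟩ := hsub hx
    simp only at hp hq
    have h1 := hK _ hmem _ hx _ hx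
    rw [tri_exx α₀ β₀ p q hq hp] at h1
    have h2 := hK _ hx _ hx _ hmem
    rw [tri_xxe α₀ β₀ p q hq hp] at h2
    have hq' : q = β₀ := by
      by_contra h
      exact hdiag (q - β₀) (by omega) (by convert h1 using 2 <;> ring)
    have hp' : p = α₀ := by
      by_contra h
      exact hdiag (p - α₀) (by omega) (by convert h2 using 2 <;> omega)
    simp [hp', hq']
  · rintro rfl; exact hmem
end

section
/- Let K be a subsemiheap of the extended bicyclic semigroup with a_{α₀β₀} ∈ K ⊆ K_{α₀,β₀}, and suppose a_{α₀β₀} and finitely many points a_{α₀+k_j, β₀+k_j} (1 ≤ j ≤ n₀, with 1 ≤ k₁ < ⋯ < k_{n₀}) are the only elements of K on the diagonal {a_{α₀+k, β₀+k} : k ≥ 0}, and a_{α₀β} ∉ K for β > β₀ and a_{αβ₀} ∉ K for α > α₀. Then K = {a_{α₀β₀}} ∪ {a_{α₀+k_j, β₀+k_j} : 1 ≤ j ≤ n₀}, i.e. K contains no off-diagonal elements. -/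
theorem stmt14 (K : Set (ℤ × ℤ)) (hK : IsSubsemiheap K) (α₀ β₀ : ℤ)
    (hsub : K ⊆ {x : ℤ × ℤ | α₀ ≤ x.1 ∧ β₀ ≤ x.2})
    (hmem : ((α₀, β₀) : ℤ × ℤ) ∈ K)
    (n₀ : ℕ) (k : ℕ → ℤ) (hk1 : 1 ≤ k 1)
    (hkmono : ∀ j : ℕ, 1 ≤ j → j < n₀ → k j < k (j + 1))
    (hdiag : ∀ m : ℤ, 0 ≤ m →
      (((α₀ + m, β₀ + m) : ℤ × ℤ) ∈ K ↔
        m = 0 ∨ ∃ j : ℕ, 1 ≤ j ∧ j ≤ n₀ ∧ m = k j))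
    (hrow : ∀ β : ℤ, β₀ < β → ((α₀, β) : ℤ × ℤ) ∉ K)
    (hcol : ∀ α : ℤ, α₀ < α → ((α, β₀) : ℤ × ℤ) ∉ K) :
    K = {((α₀, β₀) : ℤ × ℤ)} ∪
        {x : ℤ × ℤ | ∃ j : ℕ, 1 ≤ j ∧ j ≤ n₀ ∧ x = (α₀ + k j, β₀ + k j)} := by
  -- monotonicity of k on [1, n₀]
  have kmono : ∀ i j : ℕ, 1 ≤ i → i ≤ j → j ≤ n₀ → k i ≤ k j := by
    intro i j hi hij hj
    induction j with
    | zero => omega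
    | succ m ih =>
      rcases Nat.lt_or_ge i (m + 1) with h | h
      · have h1 := hkmono m (by omega) (by omega)
        have h2 := ih (by omega) (by omega)
        omega
      · have : i = m + 1 := by omega
        subst this; omega
  -- swapping coordinates stays in K
  have swap : ∀ p q : ℤ, 0 ≤ p → 0 ≤ q → ((α₀ + p, β₀ + q) : ℤ × ℤ) ∈ K →
      ((α₀ + q, β₀ + p) : ℤ × ℤ) ∈ K := by
    intro p q hp hq hx
    have h := hK _ hmem _ hx _ hmem
    have e : tri (α₀, β₀) (α₀ + p, β₀ + q) (α₀, β₀) = ((α₀ + q, β₀ + p) : ℤ × ℤ) := by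
      simp only [tri, emul, estar, Prod.mk.injEq]
      constructor <;> omega
    rwa [e] at h
  -- projection to the diagonal
  have diagK : ∀ a c : ℤ, 0 ≤ a → 0 ≤ c → ((α₀ + c, β₀ + a) : ℤ × ℤ) ∈ K →
      ((α₀ + c, β₀ + c) : ℤ × ℤ) ∈ K := by
    intro a c ha hc hx
    have h := hK _ hx _ hx _ hmem
    have e : tri (α₀ + c, β₀ + a) (α₀ + c, β₀ + a) (α₀, β₀) = ((α₀ + c, β₀ + c) : ℤ × ℤ) := by
      simp only [tri, emul, estar, Prod.mk.injEq]
      constructor <;> omega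
    rwa [e] at h
  -- the growth step
  have step : ∀ a b c : ℤ, 0 ≤ a → a + 1 ≤ b → b ≤ c →
      ((α₀ + c, β₀ + a) : ℤ × ℤ) ∈ K → ((α₀ + a, β₀ + b) : ℤ × ℤ) ∈ K →
      ((α₀ + (2 * c + b - 2 * a), β₀ + a) : ℤ × ℤ) ∈ K := by
    intro a b c ha hab hbc hu hv
    have h := hK _ hu _ hv _ hu
    have e : tri (α₀ + c, β₀ + a) (α₀ + a, β₀ + b) (α₀ + c, β₀ + a)
        = ((α₀ + (2 * c + b - 2 * a), β₀ + a) : ℤ × ℤ) := by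
      simp only [tri, emul, estar, Prod.mk.injEq]
      constructor <;> omega
    rwa [e] at h
  -- no off-diagonal elements
  have nodiag : ∀ p q : ℤ, 0 ≤ p → 0 ≤ q → ((α₀ + p, β₀ + q) : ℤ × ℤ) ∈ K → p = q := by
    intro p q hp hq hx
    by_contra hne
    -- set a = min, b = max; both (b,a) and (a,b) are in K
    obtain ⟨a, b, ha, hab, hu, hv⟩ :
        ∃ a b : ℤ, 0 ≤ a ∧ a < b ∧ ((α₀ + b, β₀ + a) : ℤ × ℤ) ∈ K ∧
          ((α₀ + a, β₀ + b) : ℤ × ℤ) ∈ K := by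
      rcases lt_or_gt_of_ne hne with h | h
      · exact ⟨p, q, hp, h, swap p q hp hq hx, hx⟩
      · exact ⟨q, p, hq, h, hx, swap p q hp hq hx⟩
    -- a ≥ 1, else hcol is violated
    have ha1 : 1 ≤ a := by
      by_contra h
      have ha0 : a = 0 := by omega
      subst ha0
      have : ((α₀ + b, β₀) : ℤ × ℤ) ∈ K := by simpa using hu
      exact hcol (α₀ + b) (by omega) this
    -- grow an unbounded sequence in the row β₀ + a
    have grow : ∀ t : ℕ, ∃ c : ℤ, b + t ≤ c ∧ ((α₀ + c, β₀ + a) : ℤ × ℤ) ∈ K := by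
      intro t
      induction t with
      | zero => exact ⟨b, by omega, hu⟩
      | succ m ih =>
        obtain ⟨c, hc, hcK⟩ := ih
        refine ⟨2 * c + b - 2 * a, by omega, ?_⟩
        exact step a b c (by omega) (by omega) (by omega) hcK hv
    -- each such c is a diagonal value, hence ≤ k n₀
    have hbound : ∀ c : ℤ, 1 ≤ c → ((α₀ + c, β₀ + c) : ℤ × ℤ) ∈ K → c ≤ k n₀ := by
      intro c hc hcK
      rcases (hdiag c (by omega)).mp hcK with h | ⟨j, hj1, hj2, hj3⟩
      · omega
      · have := kmono j n₀ hj1 hj2 le_rfl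
        omega
    obtain ⟨c, hc, hcK⟩ := grow (k n₀ - b + 1).toNat
    have hdc : ((α₀ + c, β₀ + c) : ℤ × ℤ) ∈ K := diagK a c (by omega) (by omega) hcK
    have := hbound c (by omega) hdc
    omega
  -- conclude
  ext x
  constructor
  · intro hx
    obtain ⟨h1, h2⟩ := hsub hx
    have hx' : ((α₀ + (x.1 - α₀), β₀ + (x.2 - β₀)) : ℤ × ℤ) ∈ K := by
      have : ((α₀ + (x.1 - α₀), β₀ + (x.2 - β₀)) : ℤ × ℤ) = x := by
        apply Prod.ext <;> simp <;> omega
      rwa [this]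
    have heq := nodiag (x.1 - α₀) (x.2 - β₀) (by omega) (by omega) hx'
    rw [heq] at hx'
    rcases (hdiag (x.2 - β₀) (by omega)).mp hx' with h | ⟨j, hj1, hj2, hj3⟩
    · left
      have : x = ((α₀, β₀) : ℤ × ℤ) := by
        apply Prod.ext <;> simp <;> omega
      simp [this]
    · right
      refine ⟨j, hj1, hj2, ?_⟩
      apply Prod.ext <;> simp <;> omega
  · intro hx
    rcases hx with hx | ⟨j, hj1, hj2, hj3⟩
    · simp only [Set.mem_singleton_iff] at hx
      rwa [hx]
    · have hkj : 1 ≤ k j := le_trans hk1 (kmono 1 j le_rfl hj1 hj2)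
      rw [hj3]
      exact (hdiag (k j) (by omega)).mpr (Or.inr ⟨j, hj1, hj2, rfl⟩)
end

section
/- Let K be a subsemiheap of the extended bicyclic semigroup with K ⊆ K_{α₀,β₀} = {a_{pq} : p ≥ α₀, q ≥ β₀}, containing both a point a_{α₀β₀} on the corner and a point a_{α₀+r, β₀} with r ≥ 1 in the first column. Then K contains a_{α₀, β₀+r}; in particular, if no element a_{α₀β} with β > β₀ lies in K, then no element a_{αβ₀} with α > α₀ lies in K (Cases 1.2 and 1.3 do not occur). -/
theorem stmt15 (K : Set (ℤ × ℤ)) (hK : IsSubsemiheap K) (α₀ β₀ : ℤ)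
    (hsub : K ⊆ {x : ℤ × ℤ | α₀ ≤ x.1 ∧ β₀ ≤ x.2})
    (hmem : ((α₀, β₀) : ℤ × ℤ) ∈ K) :
    (∀ r : ℤ, 1 ≤ r → ((α₀ + r, β₀) : ℤ × ℤ) ∈ K → ((α₀, β₀ + r) : ℤ × ℤ) ∈ K) ∧
    ((∀ β : ℤ, β₀ < β → ((α₀, β) : ℤ × ℤ) ∉ K) →
      ∀ α : ℤ, α₀ < α → ((α, β₀) : ℤ × ℤ) ∉ K) := by
  have main : ∀ r : ℤ, 1 ≤ r → ((α₀ + r, β₀) : ℤ × ℤ) ∈ K → ((α₀, β₀ + r) : ℤ × ℤ) ∈ K := by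
    intro r hr hm
    have h := hK _ hmem _ hm _ hmem
    have : tri (α₀, β₀) (α₀ + r, β₀) (α₀, β₀) = (α₀, β₀ + r) := by
      simp only [tri, emul, estar]
      have h1 : min β₀ β₀ = β₀ := min_self _
      have h2 : min (α₀ + r) α₀ = α₀ := min_eq_right (by linarith)
      simp [h1, h2]; ring
    rwa [this] at h
  refine ⟨main, ?_⟩
  intro hno α hα hm
  have hr : (1:ℤ) ≤ α - α₀ := by linarith
  have := main (α - α₀) hr (by simpa using hm)
  exact hno (β₀ + (α - α₀)) (by linarith) this
end

section
/- Let K be a subsemiheap of the extended bicyclic semigroup with K ⊆ K_{α₀,β₀}, containing a_{α₀β₀} and a point a_{α₀, β₀+p} with p ≥ 1. Then K contains a_{α₀+p, β₀}; in particular Case 2.1 (where the first column contains only a_{α₀β₀}) does not occur. -/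
theorem stmt16 (K : Set (ℤ × ℤ)) (hK : IsSubsemiheap K) (α₀ β₀ : ℤ)
    (hsub : K ⊆ {x : ℤ × ℤ | α₀ ≤ x.1 ∧ β₀ ≤ x.2})
    (hmem : ((α₀, β₀) : ℤ × ℤ) ∈ K)
    (p : ℤ) (hp : 1 ≤ p) (hrow : ((α₀, β₀ + p) : ℤ × ℤ) ∈ K) :
    ((α₀ + p, β₀) : ℤ × ℤ) ∈ K := by
  have h := hK _ hmem _ hrow _ hmem
  simp only [tri, emul, estar] at h
  have : min β₀ (β₀ + p) = β₀ := min_eq_left (by linarith)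
  rw [this] at h
  have e : β₀ + α₀ - β₀ = α₀ := by ring
  rw [e, min_self] at h
  convert h using 2 <;> ring
end

section
/- Let K be a subsemiheap of the extended bicyclic semigroup containing a_{α₀, β₀+p}, a_{α₀+q, β₀+q}, and a_{α₀+r, β₀} with p, q, r ≥ 1. If q < r < p, then the triple product a_{α₀,β₀+p} (a_{α₀+q,β₀+q})* a_{α₀+r,β₀} equals a_{α₀, β₀+p-r}; hence K contains an element a_{α₀,β₀+p'} with 1 ≤ p' < p whenever additionally r < p and q ≤ p. -/
theorem stmt17 (K : Set (ℤ × ℤ)) (hK : IsSubsemiheap K) (α₀ β₀ : ℤ)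
    (p q r : ℤ) (hp : 1 ≤ p) (hq : 1 ≤ q) (hr : 1 ≤ r)
    (h1 : ((α₀, β₀ + p) : ℤ × ℤ) ∈ K)
    (h2 : ((α₀ + q, β₀ + q) : ℤ × ℤ) ∈ K)
    (h3 : ((α₀ + r, β₀) : ℤ × ℤ) ∈ K)
    (hqr : q < r) (hrp : r < p) :
    tri (α₀, β₀ + p) (α₀ + q, β₀ + q) (α₀ + r, β₀) = (α₀, β₀ + p - r) ∧
    ∃ p' : ℤ, 1 ≤ p' ∧ p' < p ∧ ((α₀, β₀ + p') : ℤ × ℤ) ∈ K := by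
  have key : tri (α₀, β₀ + p) (α₀ + q, β₀ + q) (α₀ + r, β₀) = (α₀, β₀ + p - r) := by
    simp only [tri, emul, estar]
    have h1 : min (β₀ + p) (β₀ + q) = β₀ + q := by omega
    have h2 : min (α₀ + (β₀ + q) - (β₀ + q)) (α₀ + r) = α₀ := by omega
    rw [h1]
    simp only [Prod.mk.injEq]
    constructor <;> omega
  refine ⟨key, p - r, by omega, by omega, ?_⟩
  have := hK _ h1 _ h2 _ h3
  rw [key] at this
  have : β₀ + (p - r) = β₀ + p - r := by omega
  rw [this]
  assumption
end
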